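/- arXiv:2009.00732 — 2 statements merged into one kernel-verified Lean document; each statement's English description precedes it below -/
import Mathlib

section
/- Let G be a graph, v a vertex of G, and k ≥ 1. If there is an escape path in G from v to a pendant vertex ℓ, then the number of independent sets of G of size k containing v is at most the number of independent sets of G of size k containing ℓ. -/
open scoped Classical

variable {V : Type*}

/-- `P = p 1, p 2, …, p n` is an escape path in `G` (from `p 1` to `p n`):
a path in `G` whose last vertex `p n` has degree 1 and whose vertices
`p i` for `2 ≤ i ≤ n - 2` have degree 2. -/
def IsEscapePath [Fintype V] (G : SimpleGraph V) (n : ℕ) (p : ℕ → V) : Prop :=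
  1 ≤ n ∧ Set.InjOn p (Set.Icc 1 n) ∧
  (∀ i, 1 ≤ i → i < n → G.Adj (p i) (p (i + 1))) ∧
  G.degree (p n) = 1 ∧
  ∀ i, 2 ≤ i → i ≤ n - 2 → G.degree (p i) = 2

/-- The flip of the path `p 1, …, p n`: it maps `p i` to `p (n + 1 - i)` and
fixes every vertex outside the path. -/
noncomputable def flipP (n : ℕ) (p : ℕ → V) : V → V := fun x =>
  if h : ∃ i, 1 ≤ i ∧ i ≤ n ∧ p i = x then p (n + 1 - h.choose) else x

/-- `s` is an independent set of `G`. -/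
def IndepSet (G : SimpleGraph V) (s : Set V) : Prop :=
  ∀ x ∈ s, ∀ y ∈ s, x ≠ y → ¬ G.Adj x y

/-- The star `I^k_G(u)`: the family of independent `k`-subsets of `G`
containing the vertex `u`. -/
noncomputable def star [Fintype V] (G : SimpleGraph V) (k : ℕ) (u : V) :
    Finset (Finset V) :=
  Finset.univ.filter
    (fun A : Finset V => A.card = k ∧ u ∈ A ∧
      ∀ x ∈ A, ∀ y ∈ A, x ≠ y → ¬ G.Adj x y)

lemma flipP_apply {n : ℕ} {p : ℕ → V} (hinj : Set.InjOn p (Set.Icc 1 n))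
    {i : ℕ} (hi1 : 1 ≤ i) (hi2 : i ≤ n) :
    flipP n p (p i) = p (n + 1 - i) := by
  unfold flipP
  have h : ∃ j, 1 ≤ j ∧ j ≤ n ∧ p j = p i := ⟨i, hi1, hi2, rfl⟩
  rw [dif_pos h]
  have hs := h.choose_spec
  have : h.choose = i := hinj ⟨hs.1, hs.2.1⟩ ⟨hi1, hi2⟩ hs.2.2
  rw [this]

lemma flipP_apply_off {n : ℕ} {p : ℕ → V} {x : V}
    (h : ¬ ∃ i, 1 ≤ i ∧ i ≤ n ∧ p i = x) : flipP n p x = x := dif_neg h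

lemma flipP_invol {n : ℕ} {p : ℕ → V} (hinj : Set.InjOn p (Set.Icc 1 n)) :
    Function.Involutive (flipP n p) := by
  intro x
  by_cases h : ∃ i, 1 ≤ i ∧ i ≤ n ∧ p i = x
  · obtain ⟨i, h1, h2, rfl⟩ := h
    rw [flipP_apply hinj h1 h2, flipP_apply hinj (by omega) (by omega)]
    congr 1; omega
  · rw [flipP_apply_off h, flipP_apply_off h]

/-- if there is an escape path in `G` from `v` to a pendant vertex
`ℓ`, then for every `k ≥ 1` the star `I^k_G(v)` is at most as large as `I^k_G(ℓ)`. -/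
theorem star_le_star_of_escapePath [Fintype V] (G : SimpleGraph V)
    (k : ℕ) (hk : 1 ≤ k) (v ℓ : V) (hℓ : G.degree ℓ = 1)
    (n : ℕ) (p : ℕ → V) (hp : IsEscapePath G n p) (h1 : p 1 = v) (hn : p n = ℓ) :
    (star G k v).card ≤ (star G k ℓ).card := by
  obtain ⟨hn1, hinj, hadj, hdegl, hdeg2⟩ := hp
  rcases eq_or_lt_of_le hn1 with h1n | hn2
  · have hvl : v = ℓ := by rw [← h1, ← hn, ← h1n]
    subst hvl; exact le_rfl
  -- now 2 ≤ n
  have hmem : ∀ a b, 1 ≤ a → a ≤ n → 1 ≤ b → b ≤ n → p a = p b → a = b :=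
    fun a b ha ha' hb hb' h => hinj ⟨ha, ha'⟩ ⟨hb, hb'⟩ h
  -- key neighbour lemma
  have Lnbr : ∀ a, 2 ≤ a → a ≤ n → a ≠ n - 1 → ∀ y, G.Adj (p a) y →
      y = p (a - 1) ∨ (a + 1 ≤ n ∧ y = p (a + 1)) := by
    intro a ha2 han hane y hy
    by_cases han' : a = n
    · left
      rw [han'] at hy ⊢
      have hadj' : G.Adj (p (n - 1)) (p n) := by
        have := hadj (n - 1) (by omega) (by omega)
        rwa [show n - 1 + 1 = n by omega] at this
      have hcard : (G.neighborFinset (p n)).card = 1 := by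
        rw [G.card_neighborFinset_eq_degree]; exact hdegl
      obtain ⟨z, hz⟩ := Finset.card_eq_one.mp hcard
      have hz1 : p (n - 1) = z := by
        have : p (n - 1) ∈ G.neighborFinset (p n) := by
          rw [SimpleGraph.mem_neighborFinset]; exact hadj'.symm
        simpa [hz] using this
      have hz2 : y = z := by
        have : y ∈ G.neighborFinset (p n) := by
          rw [SimpleGraph.mem_neighborFinset]; exact hy
        simpa [hz] using this
      rw [hz2, hz1]
    · -- interior: 2 ≤ a ≤ n - 2
      have ha' : a ≤ n - 2 := by omega
      have e1 : G.Adj (p a) (p (a - 1)) := by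
        have := hadj (a - 1) (by omega) (by omega)
        rw [show a - 1 + 1 = a by omega] at this
        exact this.symm
      have e2 : G.Adj (p a) (p (a + 1)) := hadj a (by omega) (by omega)
      have hne : p (a - 1) ≠ p (a + 1) := fun h => by
        have := hmem _ _ (by omega) (by omega) (by omega) (by omega) h; omega
      have hsub : ({p (a - 1), p (a + 1)} : Finset V) ⊆ G.neighborFinset (p a) := by
        intro z hz
        simp only [Finset.mem_insert, Finset.mem_singleton] at hz
        rcases hz with rfl | rfl <;>
          · rw [SimpleGraph.mem_neighborFinset]; first | exact e1 | exact e2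
      have hcard2 : (G.neighborFinset (p a)).card = 2 := by
        rw [G.card_neighborFinset_eq_degree]; exact hdeg2 a ha2 ha'
      have heq : ({p (a - 1), p (a + 1)} : Finset V) = G.neighborFinset (p a) := by
        apply Finset.eq_of_subset_of_card_le hsub
        rw [hcard2, Finset.card_insert_of_notMem (by simp [hne]), Finset.card_singleton]
      have hyy : y ∈ ({p (a - 1), p (a + 1)} : Finset V) := by
        rw [heq, SimpleGraph.mem_neighborFinset]; exact hy
      simp only [Finset.mem_insert, Finset.mem_singleton] at hyy
      rcases hyy with rfl | rfl
      · left; rfl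
      · right; exact ⟨by omega, rfl⟩
  set f := flipP n p with hf
  have hfinj : Function.Injective f := (flipP_invol hinj).injective
  apply Finset.card_le_card_of_injOn (fun A => A.image f)
  · intro A hA
    simp only [Finset.mem_coe, _root_.star, Finset.mem_filter, Finset.mem_univ, true_and] at hA ⊢
    obtain ⟨hAcard, hvA, hAind⟩ := hA
    have h1A : p 1 ∈ A := h1 ▸ hvA
    have hp2 : p 2 ∉ A := fun h2A =>
      hAind (p 1) h1A (p 2) h2A
        (fun he => by have := hmem 1 2 (by omega) (by omega) (by omega) (by omega) he; omega)
        (hadj 1 le_rfl hn2)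
    have key : ∀ x ∈ A, ∀ j, 1 ≤ j → j ≤ n → p j ∈ A →
        f (p j) ≠ f x → G.Adj (f (p j)) (f x) → False := by
      intro x hxA j hj1 hjn hjA hne hadjfx
      have hj2 : j ≠ 2 := fun h => hp2 (h ▸ hjA)
      by_cases hjn' : j = n
      · rw [hjn'] at hjA hne hadjfx
        have hfj : f (p n) = p 1 := by
          rw [hf, flipP_apply hinj (by omega) le_rfl]; congr 1; omega
        rw [hfj] at hadjfx hne
        by_cases hx_on : ∃ i, 1 ≤ i ∧ i ≤ n ∧ p i = x
        · obtain ⟨i, hi1, hin, rfl⟩ := hx_on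
          have hiN : i ≠ n := fun h => hne (by rw [h, hfj])
          have hi2 : i ≠ 2 := fun h => hp2 (h ▸ hxA)
          have hfx : f (p i) = p (n + 1 - i) := flipP_apply hinj hi1 hin
          rw [hfx] at hadjfx
          rcases Lnbr (n + 1 - i) (by omega) (by omega) (by omega) (p 1) hadjfx.symm with
            h | ⟨hle, h⟩
          · have := hmem 1 _ (by omega) (by omega) (by omega) (by omega) h
            have hin1 : i = n - 1 := by omega
            subst hin1
            exact hAind (p (n - 1)) hxA (p n) hjA
              (fun he => by
                have := hmem _ _ (by omega) (by omega) (by omega) (by omega) he; omega)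
              (by
                have := hadj (n - 1) (by omega) (by omega)
                rwa [show n - 1 + 1 = n by omega] at this)
          · have := hmem 1 _ (by omega) (by omega) (by omega) (by omega) h
            omega
        · rw [show f x = x from flipP_apply_off hx_on] at hadjfx hne
          exact hAind (p 1) h1A x hxA (fun he => hx_on ⟨1, by omega, by omega, he⟩) hadjfx
      · -- j ≠ n
        have hfj : f (p j) = p (n + 1 - j) := flipP_apply hinj hj1 hjn
        rw [hfj] at hadjfx hne
        have hres := Lnbr (n + 1 - j) (by omega) (by omega) (by omega) (f x) hadjfx
        by_cases hx_on : ∃ i, 1 ≤ i ∧ i ≤ n ∧ p i = x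
        · obtain ⟨i, hi1, hin, rfl⟩ := hx_on
          have hfx : f (p i) = p (n + 1 - i) := flipP_apply hinj hi1 hin
          rw [hfx] at hres
          rcases hres with h | ⟨hle, h⟩
          · have := hmem _ _ (by omega) (by omega) (by omega) (by omega) h
            have hij : i = j + 1 := by omega
            subst hij
            exact hAind (p j) hjA (p (j + 1)) hxA
              (fun he => by
                have := hmem _ _ (by omega) (by omega) (by omega) (by omega) he; omega)
              (hadj j (by omega) (by omega))
          · have := hmem _ _ (by omega) (by omega) (by omega) (by omega) h
            have hij : j = i + 1 := by omega
            subst hij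
            exact hAind (p i) hxA (p (i + 1)) hjA
              (fun he => by
                have := hmem _ _ (by omega) (by omega) (by omega) (by omega) he; omega)
              (hadj i (by omega) (by omega))
        · rw [show f x = x from flipP_apply_off hx_on] at hres
          rcases hres with h | ⟨hle, h⟩
          · exact hx_on ⟨n + 1 - j - 1, by omega, by omega, h.symm⟩
          · exact hx_on ⟨n + 1 - j + 1, by omega, by omega, h.symm⟩
    refine ⟨?_, ?_, ?_⟩
    · rw [Finset.card_image_of_injective A hfinj]; exact hAcard
    · refine Finset.mem_image.mpr ⟨p 1, h1A, ?_⟩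
      rw [hf, flipP_apply hinj le_rfl (by omega)]
      rw [show n + 1 - 1 = n by omega, hn]
    · intro x' hx' y' hy' hne hadj'
      obtain ⟨x, hxA, rfl⟩ := Finset.mem_image.mp hx'
      obtain ⟨y, hyA, rfl⟩ := Finset.mem_image.mp hy'
      by_cases hy_on : ∃ j, 1 ≤ j ∧ j ≤ n ∧ p j = y
      · obtain ⟨j, hj1, hjn, rfl⟩ := hy_on
        exact key x hxA j hj1 hjn hyA (fun h => hne h.symm) hadj'.symm
      · by_cases hx_on : ∃ i, 1 ≤ i ∧ i ≤ n ∧ p i = x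
        · obtain ⟨i, hi1, hin, rfl⟩ := hx_on
          exact key y hyA i hi1 hin hxA hne hadj'
        · rw [show f x = x from flipP_apply_off hx_on,
            show f y = y from flipP_apply_off hy_on] at hne hadj'
          exact hAind x hxA y hyA hne hadj'
  · intro A _ B _ h
    exact Finset.image_injective hfinj h
end

section
/- In the n-sunlet graph (a cycle C_n with one pendant edge attached to each cycle vertex), every cycle vertex has an escape path (of length 1) to its pendant neighbor; consequently, for every k ≥ 1 there is a pendant vertex ℓ such that |I^k(v)| ≤ |I^k(ℓ)| for every vertex v. -/
open scoped Classical

variable {V : Type*}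

/-- The `n`-sunlet graph: a cycle `u_1, …, u_n` (the `Sum.inl` vertices) with a
pendant vertex `w_i = Sum.inr i` attached to each cycle vertex `u_i = Sum.inl i`. -/
def sunlet (n : ℕ) : SimpleGraph (Fin n ⊕ Fin n) :=
  SimpleGraph.fromRel (fun a b =>
    match a, b with
    | Sum.inl i, Sum.inl j => (j : ℕ) = ((i : ℕ) + 1) % n
    | Sum.inl i, Sum.inr j => i = j
    | _, _ => False)

open Sum Finset

section Aux

lemma mem_star_iff [Fintype V] {G : SimpleGraph V} {k : ℕ} {u : V} {A : Finset V} :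
    A ∈ _root_.star G k u ↔ A.card = k ∧ u ∈ A ∧
      ∀ x ∈ A, ∀ y ∈ A, x ≠ y → ¬ G.Adj x y := by
  simp [_root_.star]

lemma star_le_equiv [Fintype V] (G : SimpleGraph V) (e : V ≃ V)
    (he : ∀ a b, G.Adj (e a) (e b) ↔ G.Adj a b) (k : ℕ) (u : V) :
    (_root_.star G k u).card ≤ (_root_.star G k (e u)).card := by
  apply Finset.card_le_card_of_injOn (fun A => A.image e)
  · intro A hA
    rw [Finset.mem_coe, mem_star_iff] at hA ⊢
    obtain ⟨hc, hu, hi⟩ := hA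
    refine ⟨by rw [Finset.card_image_of_injective _ e.injective, hc],
      Finset.mem_image_of_mem _ hu, ?_⟩
    rintro x hx y hy hxy
    obtain ⟨a, ha, rfl⟩ := Finset.mem_image.1 hx
    obtain ⟨b, hb, rfl⟩ := Finset.mem_image.1 hy
    rw [he]
    exact hi a ha b hb (fun h => hxy (by rw [h]))
  · intro A _ B _ h
    have := congrArg (Finset.image e.symm) h
    simpa [Finset.image_image] using this

lemma cycle_rel {n : ℕ} [NeZero n] (hn : 3 ≤ n) (i j : Fin n) :
    (j : ℕ) = ((i : ℕ) + 1) % n ↔ j = i + 1 := by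
  rw [Fin.ext_iff, Fin.add_def]
  have : ((1 : Fin n) : ℕ) = 1 := by
    rw [Fin.val_one']
    exact Nat.mod_eq_of_lt (by omega)
  rw [this]

lemma sunlet_adj_ll {n : ℕ} [NeZero n] (hn : 3 ≤ n) (i j : Fin n) :
    (sunlet n).Adj (inl i) (inl j) ↔ i ≠ j ∧ (j = i + 1 ∨ i = j + 1) := by
  simp [sunlet, SimpleGraph.fromRel_adj, cycle_rel hn]

lemma sunlet_adj_lr {n : ℕ} (i j : Fin n) :
    (sunlet n).Adj (inl i) (inr j) ↔ i = j := by
  simp [sunlet, SimpleGraph.fromRel_adj]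

lemma sunlet_adj_rr {n : ℕ} (i j : Fin n) :
    ¬ (sunlet n).Adj (inr i) (inr j) := by
  simp [sunlet, SimpleGraph.fromRel_adj]

lemma sunlet_deg_inr {n : ℕ} (j : Fin n) : (sunlet n).degree (inr j) = 1 := by
  have h : (sunlet n).neighborFinset (inr j) = {inl j} := by
    ext x
    rw [SimpleGraph.mem_neighborFinset]
    cases x with
    | inl i =>
      rw [SimpleGraph.adj_comm, sunlet_adj_lr]
      simp [eq_comm]
    | inr i =>
      simp [sunlet_adj_rr]
  rw [SimpleGraph.degree, h, Finset.card_singleton]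

lemma sunlet_rot {n : ℕ} [NeZero n] (hn : 3 ≤ n) (c : Fin n) (a b : Fin n ⊕ Fin n) :
    (sunlet n).Adj ((Equiv.sumCongr (Equiv.addRight c) (Equiv.addRight c)) a)
      ((Equiv.sumCongr (Equiv.addRight c) (Equiv.addRight c)) b) ↔
    (sunlet n).Adj a b := by
  have key : ∀ i j : Fin n, (j + c = (i + c) + 1) ↔ (j = i + 1) := by
    intro i j
    rw [add_right_comm i c 1]
    exact ⟨fun h => add_right_cancel h, fun h => by rw [h]⟩
  cases a with
  | inl i =>
    cases b with
    | inl j =>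
      simp only [Equiv.sumCongr_apply, Sum.map_inl, Equiv.coe_addRight,
        sunlet_adj_ll hn, key]
      constructor
      · rintro ⟨hne, h⟩
        exact ⟨fun h' => hne (by rw [h']), h⟩
      · rintro ⟨hne, h⟩
        exact ⟨fun h' => hne (add_right_cancel h'), h⟩
    | inr j =>
      simp only [Equiv.sumCongr_apply, Sum.map_inl, Sum.map_inr,
        Equiv.coe_addRight, sunlet_adj_lr]
      exact ⟨fun h => add_right_cancel h, fun h => by rw [h]⟩
  | inr i =>
    cases b with
    | inl j =>
      rw [SimpleGraph.adj_comm, SimpleGraph.adj_comm (sunlet n) (inr i)]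
      simp only [Equiv.sumCongr_apply, Sum.map_inl, Sum.map_inr,
        Equiv.coe_addRight, sunlet_adj_lr]
      exact ⟨fun h => add_right_cancel h, fun h => by rw [h]⟩
    | inr j =>
      simp [sunlet_adj_rr]

lemma star_inl_le_inr {n : ℕ} [NeZero n] (hn : 3 ≤ n) (k : ℕ) (j : Fin n) :
    (_root_.star (sunlet n) k (inl j)).card ≤ (_root_.star (sunlet n) k (inr j)).card := by
  apply Finset.card_le_card_of_injOn
    (fun A => if (inr j : Fin n ⊕ Fin n) ∈ A then A else insert (inr j) (A.erase (inl j)))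
  · intro A hA
    rw [Finset.mem_coe, mem_star_iff] at hA
    obtain ⟨hc, hu, hi⟩ := hA
    by_cases hm : (inr j : Fin n ⊕ Fin n) ∈ A
    · beta_reduce
      rw [if_pos hm, Finset.mem_coe, mem_star_iff]
      exact ⟨hc, hm, hi⟩
    · beta_reduce
      rw [if_neg hm, Finset.mem_coe, mem_star_iff]
      have hnm : (inr j : Fin n ⊕ Fin n) ∉ A.erase (inl j) :=
        fun h => hm (Finset.mem_of_mem_erase h)
      refine ⟨?_, Finset.mem_insert_self _ _, ?_⟩
      · rw [Finset.card_insert_of_notMem hnm, Finset.card_erase_of_mem hu, hc]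
        have : 1 ≤ k := by
          rw [← hc]
          exact Finset.card_pos.2 ⟨_, hu⟩
        omega
      · intro x hx y hy hxy
        have hadj : ∀ z ∈ A.erase (inl j), ¬ (sunlet n).Adj (inr j) z := by
          intro z hz hadj
          cases z with
          | inl m =>
            rw [SimpleGraph.adj_comm, sunlet_adj_lr] at hadj
            subst hadj
            exact Finset.notMem_erase _ _ hz
          | inr m => exact sunlet_adj_rr _ _ hadj
        rcases Finset.mem_insert.1 hx with rfl | hx
        · rcases Finset.mem_insert.1 hy with rfl | hy
          · exact absurd rfl hxy
          · exact hadj y hy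
        · rcases Finset.mem_insert.1 hy with rfl | hy
          · intro h
            exact hadj x hx h.symm
          · exact hi x (Finset.mem_of_mem_erase hx) y (Finset.mem_of_mem_erase hy) hxy
  · intro A hA B hB h
    rw [Finset.mem_coe, mem_star_iff] at hA hB
    simp only at h
    by_cases hmA : (inr j : Fin n ⊕ Fin n) ∈ A <;>
      by_cases hmB : (inr j : Fin n ⊕ Fin n) ∈ B
    · rwa [if_pos hmA, if_pos hmB] at h
    · rw [if_pos hmA, if_neg hmB] at h
      exfalso
      have : (inl j : Fin n ⊕ Fin n) ∈ insert (inr j) (B.erase (inl j)) := by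
        rw [← h]; exact hA.2.1
      rcases Finset.mem_insert.1 this with h' | h'
      · exact (Sum.inl_ne_inr h').elim
      · exact Finset.notMem_erase _ _ h'
    · rw [if_neg hmA, if_pos hmB] at h
      exfalso
      have : (inl j : Fin n ⊕ Fin n) ∈ insert (inr j) (A.erase (inl j)) := by
        rw [h]; exact hB.2.1
      rcases Finset.mem_insert.1 this with h' | h'
      · exact (Sum.inl_ne_inr h').elim
      · exact Finset.notMem_erase _ _ h'
    · rw [if_neg hmA, if_neg hmB] at h
      have hnA : (inr j : Fin n ⊕ Fin n) ∉ A.erase (inl j) :=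
        fun h' => hmA (Finset.mem_of_mem_erase h')
      have hnB : (inr j : Fin n ⊕ Fin n) ∉ B.erase (inl j) :=
        fun h' => hmB (Finset.mem_of_mem_erase h')
      have he : A.erase (inl j) = B.erase (inl j) := by
        ext x
        constructor
        · intro hx
          have : x ∈ insert (inr j) (B.erase (inl j)) := by
            rw [← h]; exact Finset.mem_insert_of_mem hx
          rcases Finset.mem_insert.1 this with rfl | h'
          · exact absurd hx hnA
          · exact h'
        · intro hx
          have : x ∈ insert (inr j) (A.erase (inl j)) := by
            rw [h]; exact Finset.mem_insert_of_mem hx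
          rcases Finset.mem_insert.1 this with rfl | h'
          · exact absurd hx hnB
          · exact h'
      have : insert (inl j : Fin n ⊕ Fin n) (A.erase (inl j)) =
          insert (inl j) (B.erase (inl j)) := by rw [he]
      rwa [Finset.insert_erase hA.2.1, Finset.insert_erase hB.2.1] at this

end Aux

/-- in the `n`-sunlet graph, every cycle vertex has an escape path
of length 1 to its pendant neighbor; consequently for every `k ≥ 1` there is a
pendant vertex `ℓ` whose star `I^k(ℓ)` is at least as large as every star
`I^k(v)`. -/
theorem sunlet_HK (n : ℕ) (hn : 3 ≤ n) :
    (∀ i : Fin n, ∃ p : ℕ → (Fin n ⊕ Fin n),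
        IsEscapePath (sunlet n) 2 p ∧ p 1 = Sum.inl i ∧ p 2 = Sum.inr i) ∧
      ∀ k : ℕ, 1 ≤ k → ∃ ℓ : Fin n ⊕ Fin n, (sunlet n).degree ℓ = 1 ∧
        ∀ v : Fin n ⊕ Fin n,
          (star (sunlet n) k v).card ≤ (star (sunlet n) k ℓ).card := by
  have hn0 : NeZero n := ⟨by omega⟩
  constructor
  · intro i
    refine ⟨fun m => if m = 1 then inl i else inr i, ⟨by norm_num, ?_, ?_, ?_, ?_⟩,
      by norm_num, by norm_num⟩
    · intro a ha b hb hab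
      simp only [Set.mem_Icc] at ha hb
      by_cases h1 : a = 1 <;> by_cases h2 : b = 1
      · omega
      · simp [h1, h2] at hab
      · simp [h1, h2] at hab
      · omega
    · intro m hm1 hm2
      have : m = 1 := by omega
      subst this
      show (sunlet n).Adj (if 1 = 1 then inl i else inr i) (if 1 + 1 = 1 then inl i else inr i)
      rw [if_pos rfl, if_neg (by norm_num)]
      rw [sunlet_adj_lr]
    · show (sunlet n).degree (if 2 = 1 then inl i else inr i) = 1
      rw [if_neg (by norm_num)]
      exact sunlet_deg_inr i
    · intro m hm1 hm2
      omega
  · intro k hk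
    refine ⟨inr 0, sunlet_deg_inr 0, ?_⟩
    intro v
    have rot : ∀ j : Fin n,
        (star (sunlet n) k (inr j)).card ≤ (star (sunlet n) k (inr 0)).card := by
      intro j
      have := star_le_equiv (sunlet n)
        (Equiv.sumCongr (Equiv.addRight (-j)) (Equiv.addRight (-j)))
        (sunlet_rot hn (-j)) k (inr j)
      simpa using this
    cases v with
    | inl j => exact le_trans (star_inl_le_inr hn k j) (rot j)
    | inr j => exact rot j
end
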